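/- Let ŝ and ŝ_⊥ be orthonormal vectors in C^L, let a, b ∈ C with |a|² + |b|² = 1, set s = a·ŝ + b·ŝ_⊥, and let 0 ≤ μ₁ ≤ μ₂. Consider maximizing |⟨f, s⟩|² over f ∈ C^L subject to |⟨f, ŝ⟩|² ≤ μ₁ and ‖f‖² ≤ μ₂. If μ₁ ≥ |a|²·μ₂ the maximum value is μ₂; if μ₁ < |a|²·μ₂ the maximum value is (|a|√μ₁ + |b|√(μ₂ - μ₁))². -/

import Mathlib

private lemma nocb_key {A B t u w v : ℝ} (hA : 0 ≤ A) (hB : 0 ≤ B)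
    (hv : 0 ≤ v) (htw : t ≤ w) (hq : u ^ 2 + t ^ 2 ≤ w ^ 2 + v ^ 2)
    (hBA : B * w ≤ A * v) : A * t + B * u ≤ A * w + B * v := by
  rcases le_or_gt u v with h | h
  · nlinarith
  · have huv : 0 < u + v := by nlinarith
    have h1 : B * (u ^ 2 - v ^ 2) ≤ B * ((w - t) * (w + t)) := by nlinarith
    have h2 : A * (u + v) ≥ B * (w + t) := by nlinarith
    nlinarith [mul_nonneg hA (sub_nonneg.2 htw)]

/-- Non-orthogonal cognitive beamforming: maximize `|⟨f,s⟩|²` subject to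
`|⟨f,shat⟩|² ≤ μ₁` and `‖f‖² ≤ μ₂`, where `s = a·shat + b·sperp` with `shat ⟂ sperp`
orthonormal and `|a|² + |b|² = 1`.  The maximum is `μ₂` when `μ₁ ≥ |a|²μ₂`, and
`(|a|√μ₁ + |b|√(μ₂-μ₁))²` when `μ₁ < |a|²μ₂`. -/
theorem nocb_optimal_value
    (L : ℕ) (hL : 2 ≤ L)
    (shat sperp : EuclideanSpace ℂ (Fin L))
    (hshat : ‖shat‖ = 1) (hsperp : ‖sperp‖ = 1) (horth : (inner ℂ shat sperp : ℂ) = 0)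
    (a b : ℂ) (hab : ‖a‖ ^ 2 + ‖b‖ ^ 2 = 1)
    (s : EuclideanSpace ℂ (Fin L)) (hs : s = a • shat + b • sperp)
    (μ₁ μ₂ : ℝ) (hμ₁ : 0 ≤ μ₁) (hμ₁₂ : μ₁ ≤ μ₂) :
    (‖a‖ ^ 2 * μ₂ ≤ μ₁ →
      IsGreatest {x : ℝ | ∃ f : EuclideanSpace ℂ (Fin L),
        ‖(inner ℂ f shat : ℂ)‖ ^ 2 ≤ μ₁ ∧ ‖f‖ ^ 2 ≤ μ₂ ∧ x = ‖(inner ℂ f s : ℂ)‖ ^ 2} μ₂) ∧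
    (μ₁ < ‖a‖ ^ 2 * μ₂ →
      IsGreatest {x : ℝ | ∃ f : EuclideanSpace ℂ (Fin L),
        ‖(inner ℂ f shat : ℂ)‖ ^ 2 ≤ μ₁ ∧ ‖f‖ ^ 2 ≤ μ₂ ∧ x = ‖(inner ℂ f s : ℂ)‖ ^ 2}
        ((‖a‖ * Real.sqrt μ₁ + ‖b‖ * Real.sqrt (μ₂ - μ₁)) ^ 2)) := by
  have hμ₂ : (0:ℝ) ≤ μ₂ := le_trans hμ₁ hμ₁₂
  -- basic inner ℂ products
  have hss : (inner ℂ shat shat : ℂ) = 1 := by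
    rw [inner_self_eq_norm_sq_to_K, hshat]; norm_num
  have hpp : (inner ℂ sperp sperp : ℂ) = 1 := by
    rw [inner_self_eq_norm_sq_to_K, hsperp]; norm_num
  have hps : (inner ℂ sperp shat : ℂ) = 0 := by
    rw [← inner_conj_symm, horth, map_zero]
  -- orthonormal family
  have hon : Orthonormal ℂ ![shat, sperp] := by
    rw [orthonormal_iff_ite]
    intro i j
    fin_cases i <;> fin_cases j <;> simp [hss, hpp, hps, horth, hshat, hsperp]
  -- norm of s is 1
  have hnorms : ‖s‖ = 1 := by
    have : (inner ℂ s s : ℂ) = ((1:ℝ) : ℂ) := by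
      rw [hs]
      simp only [inner_add_left, inner_add_right, inner_smul_left, inner_smul_right,
        hss, hpp, hps, horth, mul_zero, mul_one, add_zero, zero_add]
      rw [mul_comm a _, mul_comm b _, ← Complex.normSq_eq_conj_mul_self,
        ← Complex.normSq_eq_conj_mul_self, ← Complex.ofReal_add]
      norm_cast
      simp only [Complex.normSq_eq_norm_sq]
      exact hab
    have h3 : ‖s‖ ^ 2 = 1 := by
      rw [← inner_self_eq_norm_sq (𝕜 := ℂ), this]
      simp
    nlinarith [norm_nonneg s]
  -- decomposition of inner ℂ f s
  have hdecomp : ∀ f : EuclideanSpace ℂ (Fin L),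
      (inner ℂ f s : ℂ) = a * inner ℂ f shat + b * inner ℂ f sperp := by
    intro f
    rw [hs, inner_add_right, inner_smul_right, inner_smul_right]
  -- Bessel
  have hbessel : ∀ f : EuclideanSpace ℂ (Fin L),
      ‖(inner ℂ f shat : ℂ)‖ ^ 2 + ‖(inner ℂ f sperp : ℂ)‖ ^ 2 ≤ ‖f‖ ^ 2 := by
    intro f
    have h := hon.sum_inner_products_le (s := Finset.univ) f
    rw [Fin.sum_univ_two] at h
    simp only [Matrix.cons_val_zero, Matrix.cons_val_one, Matrix.head_cons] at h
    rw [norm_inner_symm f shat, norm_inner_symm f sperp]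
    exact h
  constructor
  · -- Case 1: μ₁ ≥ ‖a‖²μ₂
    intro hcase
    constructor
    · refine ⟨((Real.sqrt μ₂ : ℝ) : ℂ) • s, ?_, ?_, ?_⟩
      · rw [inner_smul_left]
        have : (inner ℂ s shat : ℂ) = starRingEnd ℂ a := by
          rw [hs, inner_add_left, inner_smul_left, inner_smul_left, hss, hps, mul_one,
            mul_zero, add_zero]
        rw [this]
        simp only [norm_mul, RCLike.norm_conj]
        rw [Complex.norm_real, Real.norm_eq_abs, abs_of_nonneg (Real.sqrt_nonneg _)]
        calc (Real.sqrt μ₂ * ‖a‖) ^ 2 = ‖a‖^2 * μ₂ := by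
              rw [mul_pow, Real.sq_sqrt hμ₂]; ring
          _ ≤ μ₁ := hcase
      · rw [norm_smul]
        rw [Complex.norm_real, Real.norm_eq_abs, abs_of_nonneg (Real.sqrt_nonneg _), hnorms]
        rw [mul_one, Real.sq_sqrt hμ₂]
      · rw [inner_smul_left, inner_self_eq_norm_sq_to_K, hnorms]
        simp only [norm_mul, RCLike.norm_conj]
        rw [Complex.norm_real, Real.norm_eq_abs, abs_of_nonneg (Real.sqrt_nonneg _)]
        norm_num
        rw [Real.sq_sqrt hμ₂]
    · rintro x ⟨f, hf1, hf2, rfl⟩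
      have h1 : ‖(inner ℂ f s : ℂ)‖ ≤ ‖f‖ * ‖s‖ := norm_inner_le_norm f s
      rw [hnorms, mul_one] at h1
      calc ‖(inner ℂ f s : ℂ)‖ ^ 2 ≤ ‖f‖ ^ 2 := by
            exact pow_le_pow_left₀ (norm_nonneg _) h1 2
        _ ≤ μ₂ := hf2
  · -- Case 2: μ₁ < ‖a‖²μ₂
    intro hcase
    have ha : a ≠ 0 := by
      intro h; rw [h] at hcase; simp at hcase; nlinarith
    have hna : (0:ℝ) < ‖a‖ := norm_pos_iff.2 ha
    set c₁ : ℂ := ((Real.sqrt μ₁ : ℝ) : ℂ) * (a / ‖a‖) with hc₁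
    set c₂ : ℂ := if b = 0 then 0 else ((Real.sqrt (μ₂ - μ₁) : ℝ) : ℂ) * (b / ‖b‖) with hc₂
    have hnc₁ : ‖c₁‖ ^ 2 = μ₁ := by
      rw [hc₁, norm_mul, norm_div]
      rw [Complex.norm_real, Real.norm_eq_abs, abs_of_nonneg (Real.sqrt_nonneg _)]
      rw [Complex.norm_real, Real.norm_eq_abs, abs_of_nonneg (norm_nonneg a)]
      rw [div_self (ne_of_gt hna), mul_one, Real.sq_sqrt hμ₁]
    have hnc₂ : ‖c₂‖ ^ 2 ≤ μ₂ - μ₁ := by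
      rw [hc₂]
      split_ifs with hb
      · simp; linarith
      · have hnb : (0:ℝ) < ‖b‖ := norm_pos_iff.2 hb
        rw [norm_mul, norm_div]
        rw [Complex.norm_real, Real.norm_eq_abs, abs_of_nonneg (Real.sqrt_nonneg _)]
        rw [Complex.norm_real, Real.norm_eq_abs, abs_of_nonneg (norm_nonneg b)]
        rw [div_self (ne_of_gt hnb), mul_one, Real.sq_sqrt (by linarith : (0:ℝ) ≤ μ₂ - μ₁)]
    constructor
    · refine ⟨c₁ • shat + c₂ • sperp, ?_, ?_, ?_⟩
      · have : (inner ℂ (c₁ • shat + c₂ • sperp) shat : ℂ) = starRingEnd ℂ c₁ := by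
          rw [inner_add_left, inner_smul_left, inner_smul_left, hss, hps, mul_one,
            mul_zero, add_zero]
        rw [this, RCLike.norm_conj, hnc₁]
      · have hf2 : ‖c₁ • shat + c₂ • sperp‖ ^ 2 = ‖c₁‖^2 + ‖c₂‖^2 := by
          have := norm_add_sq (𝕜 := ℂ) (c₁ • shat) (c₂ • sperp)
          rw [inner_smul_left, inner_smul_right, horth, mul_zero, mul_zero] at this
          simp only [map_zero, Complex.zero_re] at this
          rw [this, norm_smul, norm_smul, hshat, hsperp]
          ring
        rw [hf2]; linarith [hnc₁, hnc₂, hnc₁.ge]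
      · have hv : (inner ℂ (c₁ • shat + c₂ • sperp) s : ℂ)
            = ((Real.sqrt μ₁ * ‖a‖ + Real.sqrt (μ₂ - μ₁) * ‖b‖ : ℝ) : ℂ) := by
          rw [hdecomp, inner_add_left, inner_add_left, inner_smul_left, inner_smul_left,
            inner_smul_left, inner_smul_left, hss, hpp, hps, horth]
          have h1 : starRingEnd ℂ c₁ * a = ((Real.sqrt μ₁ * ‖a‖ : ℝ) : ℂ) := by
            rw [hc₁]
            rw [map_mul, Complex.conj_ofReal, map_div₀, Complex.conj_ofReal]
            field_simp
            rw [mul_assoc, ← Complex.normSq_eq_conj_mul_self, Complex.normSq_eq_norm_sq]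
            have hca : ((‖a‖ : ℝ) : ℂ) ≠ 0 :=
              Complex.ofReal_ne_zero.mpr ((norm_pos_iff.2 ha).ne')
            field_simp [hca]
            push_cast; ring
          have h2 : starRingEnd ℂ c₂ * b = ((Real.sqrt (μ₂ - μ₁) * ‖b‖ : ℝ) : ℂ) := by
            rw [hc₂]
            split_ifs with hb
            · simp [hb]
            · have hnb : (0:ℝ) < ‖b‖ := norm_pos_iff.2 hb
              rw [map_mul, Complex.conj_ofReal, map_div₀, Complex.conj_ofReal]
              field_simp
              rw [mul_assoc, ← Complex.normSq_eq_conj_mul_self, Complex.normSq_eq_norm_sq]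
              have hcb : ((‖b‖ : ℝ) : ℂ) ≠ 0 :=
                Complex.ofReal_ne_zero.mpr ((norm_pos_iff.2 hb).ne')
              field_simp [hcb]
              push_cast; ring
          rw [mul_zero, mul_one, mul_zero, mul_one, add_zero, zero_add]
          rw [mul_comm a _, mul_comm b _, h1, h2]
          push_cast; ring
        rw [hv, Complex.norm_real, Real.norm_eq_abs,
          abs_of_nonneg (by positivity : (0:ℝ) ≤ Real.sqrt μ₁ * ‖a‖ + Real.sqrt (μ₂ - μ₁) * ‖b‖)]
        ring_nf
    · rintro x ⟨f, hf1, hf2, rfl⟩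
      set α : ℂ := inner ℂ f shat with hα
      set β : ℂ := inner ℂ f sperp with hβ
      have hbes := hbessel f
      have hBA : ‖b‖ * Real.sqrt μ₁ ≤ ‖a‖ * Real.sqrt (μ₂ - μ₁) := by
        rw [← Real.sqrt_sq (norm_nonneg b), ← Real.sqrt_sq (norm_nonneg a),
          ← Real.sqrt_mul (sq_nonneg _), ← Real.sqrt_mul (sq_nonneg _)]
        apply Real.sqrt_le_sqrt
        nlinarith
      have htw : ‖α‖ ≤ Real.sqrt μ₁ := by
        rw [← Real.sqrt_sq (norm_nonneg α)]
        exact Real.sqrt_le_sqrt hf1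
      have hq : ‖β‖ ^ 2 + ‖α‖ ^ 2 ≤ Real.sqrt μ₁ ^ 2 + Real.sqrt (μ₂ - μ₁) ^ 2 := by
        rw [Real.sq_sqrt hμ₁, Real.sq_sqrt (by linarith : (0:ℝ) ≤ μ₂ - μ₁)]
        linarith
      have hnormle : ‖(inner ℂ f s : ℂ)‖ ≤ ‖a‖ * Real.sqrt μ₁ + ‖b‖ * Real.sqrt (μ₂ - μ₁) := by
        calc ‖(inner ℂ f s : ℂ)‖ = ‖a * α + b * β‖ := by rw [hdecomp]
          _ ≤ ‖a‖ * ‖α‖ + ‖b‖ * ‖β‖ := by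
              refine le_trans (norm_add_le _ _) ?_
              rw [norm_mul, norm_mul]
          _ ≤ ‖a‖ * Real.sqrt μ₁ + ‖b‖ * Real.sqrt (μ₂ - μ₁) :=
              nocb_key (norm_nonneg a) (norm_nonneg b) (Real.sqrt_nonneg _) htw hq hBA
      exact pow_le_pow_left₀ (norm_nonneg _) hnormle 2
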